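/- Let X ∈ ℝ^{n×d} be full rank with all size-s subsets of rows full rank, d ≤ s ≤ n, and let S be drawn by size-s volume sampling. Then E[‖(I_S X)^+‖_F²] = ((n−d+1)/(s−d+1)) · ‖X^+‖_F², where ‖·‖_F is the Frobenius norm. -/

import Mathlib

open Matrix Finset

noncomputable section

/-- The submatrix of `X` consisting of the rows indexed by the subset `S`. -/
def rowSub {n d : ℕ} (X : Matrix (Fin n) (Fin d) ℝ) (S : Finset (Fin n)) :
    Matrix {i // i ∈ S} (Fin d) ℝ :=
  X.submatrix (fun i => (i : Fin n)) id

/-- `X_S^⊤ X_S`. -/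
def gram {n d : ℕ} (X : Matrix (Fin n) (Fin d) ℝ) (S : Finset (Fin n)) :
    Matrix (Fin d) (Fin d) ℝ :=
  (rowSub X S)ᵀ * rowSub X S

/-- The four Penrose conditions characterizing the Moore–Penrose pseudoinverse. -/
def IsMoorePenrose {m p : Type*} [Fintype m] [Fintype p]
    (A : Matrix m p ℝ) (B : Matrix p m ℝ) : Prop :=
  A * B * A = A ∧ B * A * B = B ∧ (A * B)ᵀ = A * B ∧ (B * A)ᵀ = B * A

/-- The Moore–Penrose pseudoinverse `A⁺` of a real matrix. -/
def pinv {m p : Type*} [Fintype m] [Fintype p] (A : Matrix m p ℝ) : Matrix p m ℝ := by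
  classical exact if h : ∃ B, IsMoorePenrose A B then h.choose else 0

/-- The diagonal 0/1 selection matrix `I_S`. -/
def sel {n : ℕ} (S : Finset (Fin n)) : Matrix (Fin n) (Fin n) ℝ :=
  Matrix.diagonal (fun i => if i ∈ S then 1 else 0)

lemma sel_mul_sel {n : ℕ} (S : Finset (Fin n)) : sel S * sel S = sel S := by
  simp [sel, diagonal_mul_diagonal]

lemma sel_transpose {n : ℕ} (S : Finset (Fin n)) : (sel S)ᵀ = sel S :=
  Matrix.diagonal_transpose _

lemma sq_sum_eq_trace {m p : Type*} [Fintype m] [Fintype p] (M : Matrix p m ℝ) :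
    ∑ a, ∑ b, M a b ^ 2 = Matrix.trace (M * Mᵀ) := by
  simp [Matrix.trace, Matrix.mul_apply, Matrix.diag, sq]

lemma isMoorePenrose_unique {m p : Type*} [Fintype m] [Fintype p]
    {A : Matrix m p ℝ} {B C : Matrix p m ℝ}
    (hB : IsMoorePenrose A B) (hC : IsMoorePenrose A C) : B = C := by
  obtain ⟨hB1, hB2, hB3, hB4⟩ := hB
  obtain ⟨hC1, hC2, hC3, hC4⟩ := hC
  have hAB : A * B = A * C := by
    calc A * B = (A * B)ᵀ := hB3.symm
      _ = ((A * C * A) * B)ᵀ := by rw [hC1]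
      _ = ((A * C) * (A * B))ᵀ := by simp only [Matrix.mul_assoc]
      _ = (A * B)ᵀ * (A * C)ᵀ := Matrix.transpose_mul _ _
      _ = (A * B) * (A * C) := by rw [hB3, hC3]
      _ = (A * B * A) * C := by simp only [Matrix.mul_assoc]
      _ = A * C := by rw [hB1]
  have hBA : B * A = C * A := by
    calc B * A = (B * A)ᵀ := hB4.symm
      _ = (B * (A * C * A))ᵀ := by rw [hC1]
      _ = ((B * A) * (C * A))ᵀ := by simp only [Matrix.mul_assoc]
      _ = (C * A)ᵀ * (B * A)ᵀ := Matrix.transpose_mul _ _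
      _ = (C * A) * (B * A) := by rw [hB4, hC4]
      _ = C * (A * B * A) := by simp only [Matrix.mul_assoc]
      _ = C * A := by rw [hB1]
  calc B = B * A * B := hB2.symm
    _ = C * A * B := by rw [hBA]
    _ = C * (A * B) := Matrix.mul_assoc _ _ _
    _ = C * (A * C) := by rw [hAB]
    _ = C * A * C := (Matrix.mul_assoc _ _ _).symm
    _ = C := hC2

lemma isMoorePenrose_of_det {m p : Type*} [Fintype m] [Fintype p] [DecidableEq p]
    (A : Matrix m p ℝ) (h : IsUnit (Aᵀ * A).det) :
    IsMoorePenrose A ((Aᵀ * A)⁻¹ * Aᵀ) := by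
  have hinv : (Aᵀ * A)⁻¹ * (Aᵀ * A) = 1 := Matrix.nonsing_inv_mul _ h
  have hBA : ((Aᵀ * A)⁻¹ * Aᵀ) * A = 1 := by
    rw [Matrix.mul_assoc]; exact hinv
  have hsym : ((Aᵀ * A)⁻¹)ᵀ = (Aᵀ * A)⁻¹ := by
    rw [Matrix.transpose_nonsing_inv, Matrix.transpose_mul, Matrix.transpose_transpose]
  refine ⟨?_, ?_, ?_, ?_⟩
  · rw [Matrix.mul_assoc A _ A, hBA, Matrix.mul_one]
  · rw [hBA, Matrix.one_mul]
  · simp only [Matrix.transpose_mul, Matrix.transpose_transpose, hsym, Matrix.mul_assoc]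
  · rw [hBA, Matrix.transpose_one]

lemma pinv_eq_of_det {m p : Type*} [Fintype m] [Fintype p] [DecidableEq p]
    (A : Matrix m p ℝ) (h : IsUnit (Aᵀ * A).det) :
    pinv A = (Aᵀ * A)⁻¹ * Aᵀ := by
  have hex : ∃ B, IsMoorePenrose A B := ⟨_, isMoorePenrose_of_det A h⟩
  unfold pinv
  rw [dif_pos hex]
  exact isMoorePenrose_unique hex.choose_spec (isMoorePenrose_of_det A h)

lemma sum_sq_pinv {m p : Type*} [Fintype m] [Fintype p] [DecidableEq p]
    (A : Matrix m p ℝ) (h : IsUnit (Aᵀ * A).det) :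
    ∑ a, ∑ b, pinv A a b ^ 2 = Matrix.trace ((Aᵀ * A)⁻¹) := by
  rw [sq_sum_eq_trace, pinv_eq_of_det A h]
  have hsym : ((Aᵀ * A)⁻¹)ᵀ = (Aᵀ * A)⁻¹ := by
    rw [Matrix.transpose_nonsing_inv, Matrix.transpose_mul, Matrix.transpose_transpose]
  have key : ((Aᵀ * A)⁻¹ * Aᵀ) * ((Aᵀ * A)⁻¹ * Aᵀ)ᵀ = (Aᵀ * A)⁻¹ := by
    rw [Matrix.transpose_mul, Matrix.transpose_transpose, hsym]
    calc (Aᵀ * A)⁻¹ * Aᵀ * (A * (Aᵀ * A)⁻¹)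
        = (Aᵀ * A)⁻¹ * ((Aᵀ * A) * (Aᵀ * A)⁻¹) := by simp only [Matrix.mul_assoc]
      _ = (Aᵀ * A)⁻¹ := by rw [Matrix.mul_nonsing_inv _ h, Matrix.mul_one]
  rw [key]

lemma det_diag_expand {n k : ℕ} (Y : Matrix (Fin n) (Fin k) ℝ) (t : Fin n → ℝ) :
    (Yᵀ * Matrix.diagonal t * Y).det =
      ∑ f : Fin k → Fin n,
        (∏ j, t (f j)) * ((∏ j, Y (f j) j) * (Y.submatrix f id).det) := by
  have hM : (Yᵀ * Matrix.diagonal t * Y) = fun j => ∑ i : Fin n, (t i * Y i j) • (Y i) := by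
    ext j l
    rw [Matrix.mul_assoc, Matrix.mul_apply]
    simp only [Matrix.diagonal_mul, Matrix.transpose_apply,
      Finset.sum_apply, Pi.smul_apply, smul_eq_mul]
    exact Finset.sum_congr rfl fun i _ => by ring
  calc (Yᵀ * Matrix.diagonal t * Y).det
      = (Matrix.detRowAlternating : (Fin k → ℝ) [⋀^Fin k]→ₗ[ℝ] ℝ).toMultilinearMap
          (fun j => ∑ i : Fin n, (t i * Y i j) • (Y i)) := by rw [show (Yᵀ * Matrix.diagonal t * Y).det = (Matrix.detRowAlternating : (Fin k → ℝ) [⋀^Fin k]→ₗ[ℝ] ℝ).toMultilinearMap (Yᵀ * Matrix.diagonal t * Y) from rfl, hM]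
    _ = ∑ f : Fin k → Fin n,
          (Matrix.detRowAlternating : (Fin k → ℝ) [⋀^Fin k]→ₗ[ℝ] ℝ).toMultilinearMap
            (fun j => (t (f j) * Y (f j) j) • Y (f j)) :=
        (Matrix.detRowAlternating : (Fin k → ℝ) [⋀^Fin k]→ₗ[ℝ] ℝ).toMultilinearMap.map_sum
          (g := fun j i => (t i * Y i j) • (Y i))
    _ = ∑ f : Fin k → Fin n,
        (∏ j, t (f j)) * ((∏ j, Y (f j) j) * (Y.submatrix f id).det) := by
        refine Finset.sum_congr rfl fun f _ => ?_
        rw [(Matrix.detRowAlternating : (Fin k → ℝ) [⋀^Fin k]→ₗ[ℝ] ℝ).toMultilinearMap.map_smul_univ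
          (fun j => t (f j) * Y (f j) j) (fun j => Y (f j))]
        have h2 : (Matrix.detRowAlternating : (Fin k → ℝ) [⋀^Fin k]→ₗ[ℝ] ℝ).toMultilinearMap
            (fun j => Y (f j)) = (Y.submatrix f id).det := rfl
        simp only [smul_eq_mul, h2, Finset.prod_mul_distrib]
        ring

lemma det_submatrix_eq_zero {n k : ℕ} (Y : Matrix (Fin n) (Fin k) ℝ) {f : Fin k → Fin n}
    (hf : ¬ Function.Injective f) : (Y.submatrix f id).det = 0 := by
  rw [Function.not_injective_iff] at hf
  obtain ⟨a, b, hab, hne⟩ := hf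
  refine Matrix.det_zero_of_row_eq hne ?_
  funext l
  simp [Matrix.submatrix_apply, hab]

lemma card_supersets {n s : ℕ} {T : Finset (Fin n)} (hTs : T.card ≤ s) :
    ((Finset.powersetCard s (Finset.univ : Finset (Fin n))).filter (fun S => T ⊆ S)).card
      = (n - T.card).choose (s - T.card) := by
  have hcard : ((Finset.univ : Finset (Fin n)) \ T).card = n - T.card := by
    rw [Finset.card_sdiff_of_subset (Finset.subset_univ T), Finset.card_univ, Fintype.card_fin]
  rw [← hcard, ← Finset.card_powersetCard]
  refine Finset.card_bij (fun S _ => S \ T) ?_ ?_ ?_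
  · intro S hS
    simp only [Finset.mem_filter, Finset.mem_powersetCard] at hS
    obtain ⟨⟨_, hScard⟩, hTS⟩ := hS
    simp only [Finset.mem_powersetCard]
    constructor
    · exact Finset.sdiff_subset_sdiff (Finset.subset_univ S) le_rfl
    · rw [Finset.card_sdiff_of_subset hTS, hScard]
  · intro S1 h1 S2 h2 heq
    simp only [Finset.mem_filter, Finset.mem_powersetCard] at h1 h2
    have e1 : S1 \ T ∪ T = S1 := Finset.sdiff_union_of_subset h1.2
    have e2 : S2 \ T ∪ T = S2 := Finset.sdiff_union_of_subset h2.2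
    rw [← e1, ← e2, heq]
  · intro U hU
    simp only [Finset.mem_powersetCard] at hU
    obtain ⟨hUsub, hUcard⟩ := hU
    have hdisj : Disjoint U T := by
      refine Finset.disjoint_left.mpr fun a ha haT => ?_
      have := hUsub ha
      simp [Finset.mem_sdiff, haT] at this
    refine ⟨U ∪ T, ?_, ?_⟩
    · simp only [Finset.mem_filter, Finset.mem_powersetCard]
      refine ⟨⟨Finset.subset_univ _, ?_⟩, Finset.subset_union_right⟩
      rw [Finset.card_union_of_disjoint hdisj, hUcard]
      omega
    · ext a
      simp only [Finset.mem_sdiff, Finset.mem_union]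
      constructor
      · rintro ⟨h | h, hnT⟩
        · exact h
        · exact absurd h hnT
      · exact fun ha => ⟨Or.inl ha, fun haT => Finset.disjoint_left.mp hdisj ha haT⟩

lemma sum_det_sel {n k s : ℕ} (Y : Matrix (Fin n) (Fin k) ℝ) (hks : k ≤ s) :
    ∑ S ∈ Finset.powersetCard s (Finset.univ : Finset (Fin n)), (Yᵀ * sel S * Y).det
      = ((n - k).choose (s - k) : ℝ) * (Yᵀ * Y).det := by
  have hfull : (Yᵀ * Y).det
      = ∑ f : Fin k → Fin n, ((∏ j, Y (f j) j) * (Y.submatrix f id).det) := by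
    have h := det_diag_expand Y (fun _ => 1)
    simpa [Matrix.diagonal_one] using h
  calc ∑ S ∈ Finset.powersetCard s (Finset.univ : Finset (Fin n)), (Yᵀ * sel S * Y).det
      = ∑ S ∈ Finset.powersetCard s (Finset.univ : Finset (Fin n)),
          ∑ f : Fin k → Fin n, (∏ j, if f j ∈ S then (1:ℝ) else 0) *
            ((∏ j, Y (f j) j) * (Y.submatrix f id).det) := by
        refine Finset.sum_congr rfl fun S _ => ?_
        exact det_diag_expand Y _
    _ = ∑ f : Fin k → Fin n, ∑ S ∈ Finset.powersetCard s (Finset.univ : Finset (Fin n)),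
          (∏ j, if f j ∈ S then (1:ℝ) else 0) *
            ((∏ j, Y (f j) j) * (Y.submatrix f id).det) := Finset.sum_comm
    _ = ∑ f : Fin k → Fin n, ((n - k).choose (s - k) : ℝ) *
          ((∏ j, Y (f j) j) * (Y.submatrix f id).det) := by
        refine Finset.sum_congr rfl fun f _ => ?_
        rw [← Finset.sum_mul]
        by_cases hf : Function.Injective f
        · congr 1
          have himg : (Finset.image f Finset.univ).card = k := by
            rw [Finset.card_image_of_injective _ hf, Finset.card_univ, Fintype.card_fin]
          calc (∑ S ∈ Finset.powersetCard s (Finset.univ : Finset (Fin n)),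
                ∏ j, if f j ∈ S then (1:ℝ) else 0)
              = ∑ S ∈ Finset.powersetCard s (Finset.univ : Finset (Fin n)),
                (if Finset.image f Finset.univ ⊆ S then (1:ℝ) else 0) := by
                refine Finset.sum_congr rfl fun S _ => ?_
                rw [Finset.prod_boole]
                congr 1
                simp [Finset.image_subset_iff]
            _ = (((Finset.powersetCard s (Finset.univ : Finset (Fin n))).filter
                  (fun S => Finset.image f Finset.univ ⊆ S)).card : ℝ) := by
                rw [Finset.sum_boole]
            _ = ((n - k).choose (s - k) : ℝ) := by
                rw [card_supersets (by rw [himg]; exact hks), himg]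
        · rw [det_submatrix_eq_zero Y hf]
          ring
    _ = ((n - k).choose (s - k) : ℝ) * (Yᵀ * Y).det := by
        rw [hfull, Finset.mul_sum]

lemma adjugate_diag_eq_minor {m : ℕ} (G : Matrix (Fin (m+1)) (Fin (m+1)) ℝ) (j : Fin (m+1)) :
    G.adjugate j j = (G.submatrix j.succAbove j.succAbove).det := by
  rw [Matrix.adjugate_apply, Matrix.det_succ_row _ j]
  rw [Finset.sum_eq_single j]
  · have h1 : (G.updateRow j (Pi.single j 1)) j j = 1 := by
      rw [Matrix.updateRow_self, Pi.single_eq_same]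
    have h2 : (G.updateRow j (Pi.single j 1)).submatrix j.succAbove j.succAbove
        = G.submatrix j.succAbove j.succAbove := by
      ext a b
      simp only [Matrix.submatrix_apply]
      rw [Matrix.updateRow_ne (Fin.succAbove_ne j a)]
    rw [h1, h2, mul_one]
    have : Even ((j:ℕ) + (j:ℕ)) := ⟨j, by ring⟩
    rw [this.neg_one_pow, one_mul]
  · intro b _ hbj
    have : (G.updateRow j (Pi.single j 1)) j b = 0 := by
      rw [Matrix.updateRow_self, Pi.single_eq_of_ne hbj]
    rw [this]
    ring
  · intro h
    exact absurd (Finset.mem_univ j) h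

lemma minor_of_gram {n m : ℕ} (X : Matrix (Fin n) (Fin (m+1)) ℝ) (t : Fin n → ℝ)
    (j : Fin (m+1)) :
    (Xᵀ * Matrix.diagonal t * X).submatrix j.succAbove j.succAbove
      = (X.submatrix id j.succAbove)ᵀ * Matrix.diagonal t * (X.submatrix id j.succAbove) := by
  ext a b
  rw [Matrix.submatrix_apply, Matrix.mul_assoc, Matrix.mul_assoc, Matrix.mul_apply,
    Matrix.mul_apply]
  refine Finset.sum_congr rfl fun i _ => ?_
  simp [Matrix.diagonal_mul, Matrix.mul_apply, Matrix.submatrix_apply]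

lemma det_gram_nonneg {p : Type*} [Fintype p] {k : ℕ} (B : Matrix p (Fin k) ℝ) :
    0 ≤ (Bᵀ * B).det := by
  have hpsd : (Bᵀ * B).PosSemidef := by
    have h := Matrix.posSemidef_conjTranspose_mul_self B
    rwa [Matrix.conjTranspose_eq_transpose_of_trivial] at h
  rw [hpsd.isHermitian.det_eq_prod_eigenvalues]
  exact Finset.prod_nonneg fun i _ => hpsd.eigenvalues_nonneg i

lemma gram_eq {n d : ℕ} (X : Matrix (Fin n) (Fin d) ℝ) (S : Finset (Fin n)) :
    gram X S = Xᵀ * sel S * X := by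
  ext a b
  have hL : gram X S a b = ∑ i ∈ S, X i a * X i b := by
    rw [_root_.gram, Matrix.mul_apply, ← Finset.sum_coe_sort S (fun i => X i a * X i b)]
    rfl
  have hR : (Xᵀ * sel S * X) a b = ∑ i ∈ S, X i a * X i b := by
    rw [Matrix.mul_assoc, Matrix.mul_apply]
    simp only [Matrix.transpose_apply, sel, Matrix.diagonal_mul, ite_mul, one_mul, zero_mul,
      mul_ite, mul_zero]
    rw [Finset.sum_ite_mem, Finset.univ_inter]
  rw [hL, hR]

/-- Frobenius-norm formula: under full support,
`E[‖(I_S X)⁺‖_F²] = ((n−d+1)/(s−d+1)) ‖X⁺‖_F²`. -/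
theorem volume_sampling_frobenius {n d : ℕ} (X : Matrix (Fin n) (Fin d) ℝ)
    (hrank : X.rank = d) (hdn : d ≤ n) (s : ℕ) (hds : d ≤ s) (hsn : s ≤ n)
    (hfull : ∀ S ∈ Finset.powersetCard s (Finset.univ : Finset (Fin n)),
      (gram X S).det ≠ 0) :
    ∑ S ∈ Finset.powersetCard s (Finset.univ : Finset (Fin n)),
        ((gram X S).det / (((n - d).choose (s - d) : ℝ) * (Xᵀ * X).det)) *
          (∑ a, ∑ b, (pinv (sel S * X) a b) ^ 2)
      = (((n : ℝ) - d + 1) / ((s : ℝ) - d + 1)) * ∑ a, ∑ b, (pinv X a b) ^ 2 := by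
  classical
  rcases Nat.eq_zero_or_pos d with hd0 | hdpos
  · subst hd0
    simp
  obtain ⟨m, rfl⟩ : ∃ m, d = m + 1 := ⟨d - 1, (Nat.succ_pred_eq_of_pos hdpos).symm⟩
  set P := Finset.powersetCard s (Finset.univ : Finset (Fin n)) with hP
  set C : ℝ := ((n - (m+1)).choose (s - (m+1)) : ℝ) with hCdef
  set D0 : ℝ := (Xᵀ * X).det with hD0def
  set C' : ℝ := ((n - m).choose (s - m) : ℝ) with hC'def
  have hdetpos : ∀ S ∈ P, 0 < (gram X S).det := fun S hS =>
    lt_of_le_of_ne (det_gram_nonneg (rowSub X S)) (Ne.symm (hfull S hS))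
  have hPne : P.Nonempty := by
    obtain ⟨T, hTsub, hTcard⟩ := Finset.exists_subset_card_eq
      (show s ≤ (Finset.univ : Finset (Fin n)).card by simpa using hsn)
    exact ⟨T, by simp [hP, Finset.mem_powersetCard, hTsub, hTcard]⟩
  have hsumgram : ∑ S ∈ P, (gram X S).det = C * D0 := by
    have h := sum_det_sel (s := s) X hds
    calc ∑ S ∈ P, (gram X S).det = ∑ S ∈ P, (Xᵀ * sel S * X).det := by
          exact Finset.sum_congr rfl fun S _ => by rw [gram_eq]
      _ = C * D0 := h
  have hCpos : (0:ℝ) < C := by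
    rw [hCdef]
    exact_mod_cast Nat.choose_pos (Nat.sub_le_sub_right hsn _)
  have hD0pos : 0 < D0 := by
    have hpos : 0 < ∑ S ∈ P, (gram X S).det := Finset.sum_pos hdetpos hPne
    rw [hsumgram] at hpos
    nlinarith
  have hCD : C * D0 ≠ 0 := by positivity
  -- per-S computation
  have hterm : ∀ S ∈ P, ((gram X S).det / (C * D0)) * (∑ a, ∑ b, (pinv (sel S * X) a b) ^ 2)
      = (C * D0)⁻¹ *
        ∑ j : Fin (m+1),
          ((X.submatrix id j.succAbove)ᵀ * sel S * (X.submatrix id j.succAbove)).det := by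
    intro S hS
    have hG : (sel S * X)ᵀ * (sel S * X) = gram X S := by
      rw [Matrix.transpose_mul, sel_transpose, gram_eq]
      calc Xᵀ * sel S * (sel S * X) = Xᵀ * (sel S * sel S) * X := by
            simp only [Matrix.mul_assoc]
        _ = Xᵀ * sel S * X := by rw [sel_mul_sel]
    have hunit : IsUnit ((sel S * X)ᵀ * (sel S * X)).det := by
      rw [hG]; exact isUnit_iff_ne_zero.mpr (hfull S hS)
    rw [sum_sq_pinv _ hunit, hG]
    rw [Matrix.inv_def, Matrix.trace_smul, Ring.inverse_eq_inv, smul_eq_mul]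
    have htr : Matrix.trace (gram X S).adjugate
        = ∑ j : Fin (m+1),
            ((X.submatrix id j.succAbove)ᵀ * sel S * (X.submatrix id j.succAbove)).det := by
      rw [Matrix.trace]
      refine Finset.sum_congr rfl fun j _ => ?_
      have hd : Matrix.diag (gram X S).adjugate j = (gram X S).adjugate j j := rfl
      rw [hd, adjugate_diag_eq_minor, gram_eq]
      exact congrArg Matrix.det (minor_of_gram X _ j)
    rw [htr]
    have hne := hfull S hS
    field_simp
  have hms : m ≤ s := by omega
  have hdetY : ∀ j : Fin (m+1),
      ((X.submatrix id j.succAbove)ᵀ * (X.submatrix id j.succAbove)).det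
        = (Xᵀ * X).adjugate j j := by
    intro j
    rw [adjugate_diag_eq_minor]
    have h := minor_of_gram X (fun _ => (1:ℝ)) j
    simp only [Matrix.diagonal_one, Matrix.mul_one] at h
    rw [h]
  have hXunit : IsUnit (Xᵀ * X).det := isUnit_iff_ne_zero.mpr (ne_of_gt hD0pos)
  calc ∑ S ∈ P, ((gram X S).det / (C * D0)) * (∑ a, ∑ b, (pinv (sel S * X) a b) ^ 2)
      = ∑ S ∈ P, (C * D0)⁻¹ *
          ∑ j : Fin (m+1),
            ((X.submatrix id j.succAbove)ᵀ * sel S * (X.submatrix id j.succAbove)).det :=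
        Finset.sum_congr rfl hterm
    _ = (C * D0)⁻¹ * ∑ j : Fin (m+1), ∑ S ∈ P,
          ((X.submatrix id j.succAbove)ᵀ * sel S * (X.submatrix id j.succAbove)).det := by
        rw [← Finset.mul_sum, Finset.sum_comm]
    _ = (C * D0)⁻¹ * ∑ j : Fin (m+1), C' *
          ((X.submatrix id j.succAbove)ᵀ * (X.submatrix id j.succAbove)).det := by
        congr 1
        exact Finset.sum_congr rfl fun j _ => sum_det_sel (s := s) (X.submatrix id j.succAbove) hms
    _ = (C * D0)⁻¹ * (C' * Matrix.trace (Xᵀ * X).adjugate) := by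
        rw [← Finset.mul_sum]
        congr 2
        rw [Matrix.trace]
        exact Finset.sum_congr rfl fun j _ => hdetY j
    _ = (((n : ℝ) - (↑(m+1) : ℝ) + 1) / ((s : ℝ) - (↑(m+1) : ℝ) + 1)) * ∑ a, ∑ b, (pinv X a b) ^ 2 := by
        rw [sum_sq_pinv X hXunit, Matrix.inv_def, Matrix.trace_smul, Ring.inverse_eq_inv,
          smul_eq_mul, ← hD0def]
        set T := Matrix.trace (Xᵀ * X).adjugate with hT
        set N := n - (m+1) with hN
        set K := s - (m+1) with hK
        have hnm : n - m = N + 1 := by omega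
        have hsm : s - m = K + 1 := by omega
        have hchoose : ((N+1).choose (K+1) : ℝ) * (K+1) = ((N : ℝ)+1) * (N.choose K : ℝ) := by
          exact_mod_cast (Nat.add_one_mul_choose_eq N K).symm
        have hcastn : (n : ℝ) - (↑(m+1) : ℝ) + 1 = (N : ℝ) + 1 := by
          rw [hN, Nat.cast_sub hdn]
        have hcasts : (s : ℝ) - (↑(m+1) : ℝ) + 1 = (K : ℝ) + 1 := by
          rw [hK, Nat.cast_sub hds]
        rw [hC'def, hnm, hsm, hcastn, hcasts]
        have hK1 : (K : ℝ) + 1 ≠ 0 := by positivity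
        have hCne : C ≠ 0 := ne_of_gt hCpos
        have hD0ne : D0 ≠ 0 := ne_of_gt hD0pos
        have hCh : (((N + 1).choose (K + 1) : ℕ) : ℝ) = ((N:ℝ) + 1) * C / ((K:ℝ) + 1) := by
          rw [hCdef]
          field_simp
          linarith [hchoose]
        rw [hCh]
        field_simp
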